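/- arXiv:2106.09528 — 5 statements merged into one kernel-verified Lean document; each statement's English description precedes it below -/
import Mathlib

section
/- For any Ū > 0, along nonnegative solutions of the target-cell-limited system, the function J(U,I,V) = U - Ū - Ū·ln(U/Ū) + I + (δ/p)V satisfies dJ/dt = V·(Ū·β - δc/p). In particular dJ/dt ≤ 0 whenever Ū ≤ δc/(βp). -/
/-- Along nonnegative solutions of the target-cell-limited system with U > 0,
the Lyapunov candidate J(U,I,V) = U - Ubar - Ubar·ln(U/Ubar) + I + (δ/p)V satisfies
dJ/dt = V·(Ubar·β - δc/p); in particular dJ/dt ≤ 0 whenever Ubar ≤ δc/(βp). -/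
theorem stmt7 (β δ p c Ubar : ℝ) (hβ : 0 < β) (hδ : 0 < δ) (hp : 0 < p) (hc : 0 < c)
    (hUbar : 0 < Ubar) (U I V : ℝ → ℝ)
    (hUpos : ∀ t, 0 < U t) (hInn : ∀ t, 0 ≤ I t) (hVnn : ∀ t, 0 ≤ V t)
    (hU : ∀ t, HasDerivAt U (-β * U t * V t) t)
    (hI : ∀ t, HasDerivAt I (β * U t * V t - δ * I t) t)
    (hV : ∀ t, HasDerivAt V (p * I t - c * V t) t) (t : ℝ) :
    HasDerivAt (fun s => U s - Ubar - Ubar * Real.log (U s / Ubar) + I s + (δ / p) * V s)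
      (V t * (Ubar * β - δ * c / p)) t ∧
    (Ubar ≤ δ * c / (β * p) → V t * (Ubar * β - δ * c / p) ≤ 0) := by
  have hU0 : U t ≠ 0 := (hUpos t).ne'
  constructor
  · have hlog : HasDerivAt (fun s => Real.log (U s / Ubar)) ((-β * U t * V t) / U t) t := by
      have h1 : HasDerivAt (fun s => Real.log (U s) - Real.log Ubar)
          ((-β * U t * V t) / U t) t := ((hU t).log hU0).sub_const _
      refine h1.congr_of_eventuallyEq (Filter.Eventually.of_forall fun s => ?_)
      simp only [Real.log_div (hUpos s).ne' hUbar.ne']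
    have h := ((((hU t).sub_const Ubar).sub (hlog.const_mul Ubar)).add (hI t)).add
      ((hV t).const_mul (δ / p))
    refine h.congr_deriv ?_
    field_simp [hp.ne', hU0]
    ring
  · intro h
    have hV0 := hVnn t
    have : Ubar * β - δ * c / p ≤ 0 := by
      rw [le_div_iff₀ (mul_pos hβ hp)] at h
      rw [sub_nonpos, le_div_iff₀ hp]
      nlinarith
    exact mul_nonpos_of_nonneg_of_nonpos hV0 this
end

section
/- Along any solution of the target-cell-limited system, the quantity L(t) = U(t) + I(t) + (δ/p)·V(t) - (1/R)·ln(U(t)) is constant in time, where R = βp/(cδ). -/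
/-- Along any solution of the target-cell-limited system with U > 0, the quantity
L(t) = U(t) + I(t) + (δ/p)V(t) - (1/R)·ln(U(t)), with R = βp/(cδ), is constant. -/
theorem stmt9 (β δ p c : ℝ) (hβ : 0 < β) (hδ : 0 < δ) (hp : 0 < p) (hc : 0 < c)
    (U I V : ℝ → ℝ) (hUpos : ∀ t, 0 < U t)
    (hU : ∀ t, HasDerivAt U (-β * U t * V t) t)
    (hI : ∀ t, HasDerivAt I (β * U t * V t - δ * I t) t)
    (hV : ∀ t, HasDerivAt V (p * I t - c * V t) t) :
    ∀ t s : ℝ,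
      U t + I t + (δ / p) * V t - (1 / (β * p / (c * δ))) * Real.log (U t) =
      U s + I s + (δ / p) * V s - (1 / (β * p / (c * δ))) * Real.log (U s) := by
  set L : ℝ → ℝ := fun t =>
    U t + I t + (δ / p) * V t - (1 / (β * p / (c * δ))) * Real.log (U t) with hL
  have key : ∀ t, HasDerivAt L 0 t := by
    intro t
    have hlog : HasDerivAt (fun t => Real.log (U t)) ((-β * U t * V t) / U t) t :=
      (hU t).log (hUpos t).ne'
    have h := (((hU t).add (hI t)).add ((hV t).const_mul (δ / p))).sub
      (hlog.const_mul (1 / (β * p / (c * δ))))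
    refine h.congr_deriv ?_
    have h1 := hβ.ne'
    have h2 := hp.ne'
    have h3 := hc.ne'
    have h4 := hδ.ne'
    have h5 := (hUpos t).ne'
    field_simp
    ring
  intro t s
  have hd : Differentiable ℝ L := fun x => (key x).differentiableAt
  have : ∀ x, deriv L x = 0 := fun x => (key x).deriv
  exact is_const_of_deriv_eq_zero hd this t s
end

section
/- If a compact set X_s consists of equilibrium points of a dynamical system and every point of X_s is ε-δ (Lyapunov) stable, then the set X_s itself is ε-δ stable: for every ε > 0 there exists δ > 0 such that any solution starting within distance δ of X_s remains within distance ε of X_s for all t ≥ 0. -/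
/-- If a compact set X_s consists of ε-δ stable equilibrium points of a flow φ,
then X_s itself is ε-δ stable. -/
theorem stmt10 {X : Type*} [MetricSpace X] (φ : ℝ → X → X) (Xs : Set X)
    (hcomp : IsCompact Xs)
    (heq : ∀ x ∈ Xs, ∀ t : ℝ, 0 ≤ t → φ t x = x)
    (hstab : ∀ xs ∈ Xs, ∀ ε > (0 : ℝ), ∃ δ > (0 : ℝ),
      ∀ x : X, dist x xs < δ → ∀ t : ℝ, 0 ≤ t → dist (φ t x) xs < ε) :
    ∀ ε > (0 : ℝ), ∃ δ > (0 : ℝ),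
      ∀ x : X, Metric.infDist x Xs < δ →
        ∀ t : ℝ, 0 ≤ t → Metric.infDist (φ t x) Xs < ε := by
  intro ε hε
  rcases Xs.eq_empty_or_nonempty with hXs | hXs
  · refine ⟨1, one_pos, fun x _ t _ => ?_⟩
    simp [hXs, Metric.infDist_empty, hε]
  · -- choose stability radii
    choose! δf hδf hδball using fun xs hxs => hstab xs hxs ε hε
    -- cover by half-balls
    have hcover : Xs ⊆ ⋃ xs ∈ Xs, Metric.ball xs (δf xs / 2) := by
      intro y hy
      exact Set.mem_biUnion hy (by simpa using half_pos (hδf y hy))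
    obtain ⟨s, hs_sub, hs_fin, hs_cover⟩ := hcomp.elim_finite_subcover_image
      (fun xs hxs => Metric.isOpen_ball) hcover
    have hs_ne : s.Nonempty := by
      rcases hXs with ⟨y, hy⟩
      rcases Set.mem_iUnion₂.1 (hs_cover hy) with ⟨i, hi, _⟩
      exact ⟨i, hi⟩
    -- δ = min over finite set of δf i / 2
    obtain ⟨i0, hi0⟩ := hs_ne
    set F := hs_fin.toFinset with hF
    have hF_ne : F.Nonempty := ⟨i0, hs_fin.mem_toFinset.2 hi0⟩
    set δ0 := F.inf' hF_ne (fun i => δf i / 2) with hδ0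
    have hδ0pos : 0 < δ0 := by
      apply Finset.lt_inf'_iff hF_ne |>.2
      intro i hi
      exact half_pos (hδf i (hs_sub (hs_fin.mem_toFinset.1 hi)))
    refine ⟨δ0, hδ0pos, fun x hx t ht => ?_⟩
    obtain ⟨y, hy, hxy⟩ := (Metric.infDist_lt_iff hXs).1 hx
    rcases Set.mem_iUnion₂.1 (hs_cover hy) with ⟨i, hi, hyi⟩
    have hiXs : i ∈ Xs := hs_sub hi
    have hδ0le : δ0 ≤ δf i / 2 := Finset.inf'_le _ (hs_fin.mem_toFinset.2 hi)
    have hdist : dist x i < δf i := by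
      calc dist x i ≤ dist x y + dist y i := dist_triangle x y i
        _ < δ0 + δf i / 2 := add_lt_add hxy (by simpa [Metric.mem_ball] using hyi)
        _ ≤ δf i / 2 + δf i / 2 := by linarith
        _ = δf i := by ring
    have := hδball i hiXs x hdist t ht
    exact lt_of_le_of_lt (Metric.infDist_le_dist_of_mem hiXs) this
end

section
/- The principal branch of the Lambert W function is strictly increasing on [-1/e, 0), mapping (-1/e, 0) bijectively onto (-1, 0); consequently the map I₀ ↦ -W(-R·U*·e^{-R(U* + I₀)})/R with U* = 1/R is a bijection from (0, ∞) onto (0, U*). -/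
/-- The principal branch W of the Lambert W function (inverse of w ↦ w·e^w on
[-1,∞)) is strictly increasing on [-1/e, 0), maps (-1/e,0) bijectively onto
(-1,0); consequently I₀ ↦ -W(-R·U*·e^{-R(U*+I₀)})/R, with U* = 1/R, is a
bijection from (0,∞) onto (0, U*). -/
theorem stmt13 (R : ℝ) (hR : 0 < R) (W : ℝ → ℝ)
    (hW : ∀ w : ℝ, -1 ≤ w → W (w * Real.exp w) = w)
    (hWrange : ∀ y : ℝ, -Real.exp (-1) ≤ y → y < 0 →
      -1 ≤ W y ∧ W y < 0 ∧ W y * Real.exp (W y) = y) :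
    StrictMonoOn W (Set.Ico (-Real.exp (-1)) 0) ∧
    Set.BijOn W (Set.Ioo (-Real.exp (-1)) 0) (Set.Ioo (-1) 0) ∧
    Set.BijOn
      (fun I₀ : ℝ => -(W (-(R * (1 / R) * Real.exp (-(R * (1 / R + I₀)))))) / R)
      (Set.Ioi 0) (Set.Ioo 0 (1 / R)) := by
  have hR0 : R ≠ 0 := hR.ne'
  have hinv : R * (1 / R) = 1 := by field_simp
  -- f(w) = w * exp w is strictly increasing on [-1, ∞)
  have hf : StrictMonoOn (fun w : ℝ => w * Real.exp w) (Set.Ici (-1)) := by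
    apply strictMonoOn_of_deriv_pos (convex_Ici _)
    · exact (continuous_id.mul Real.continuous_exp).continuousOn
    · intro x hx
      rw [interior_Ici] at hx
      have h1 : HasDerivAt (fun w : ℝ => w * Real.exp w)
          (1 * Real.exp x + x * Real.exp x) x :=
        (hasDerivAt_id x).mul (Real.hasDerivAt_exp x)
      rw [h1.deriv]
      nlinarith [Real.exp_pos x, Set.mem_Ioi.mp hx]
  -- strict monotonicity of W
  have hmono : StrictMonoOn W (Set.Ico (-Real.exp (-1)) 0) := by
    intro x hx y hy hxy
    obtain ⟨hx1, hx2, hx3⟩ := hWrange x hx.1 hx.2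
    obtain ⟨hy1, hy2, hy3⟩ := hWrange y hy.1 hy.2
    by_contra h
    push_neg at h
    have := (hf.le_iff_le (Set.mem_Ici.mpr hy1) (Set.mem_Ici.mpr hx1)).mpr h
    simp only [hx3, hy3] at this
    linarith
  -- W maps Ioo(-e⁻¹,0) into Ioo(-1,0)
  have hmaps : ∀ y ∈ Set.Ioo (-Real.exp (-1)) 0, W y ∈ Set.Ioo (-1 : ℝ) 0 := by
    intro y hy
    obtain ⟨h1, h2, h3⟩ := hWrange y hy.1.le hy.2
    refine ⟨lt_of_le_of_ne h1 ?_, h2⟩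
    intro heq
    rw [← heq] at h3
    have : (-1 : ℝ) * Real.exp (-1) = y := h3
    have := hy.1
    linarith
  have hinj : Set.InjOn W (Set.Ioo (-Real.exp (-1)) 0) :=
    hmono.injOn.mono (Set.Ioo_subset_Ico_self)
  have hbij : Set.BijOn W (Set.Ioo (-Real.exp (-1)) 0) (Set.Ioo (-1) 0) := by
    refine ⟨hmaps, hinj, ?_⟩
    intro w hw
    refine ⟨w * Real.exp w, ⟨?_, ?_⟩, hW w hw.1.le⟩
    · have := hf (Set.mem_Ici.mpr le_rfl) (Set.mem_Ici.mpr hw.1.le) hw.1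
      simpa using this
    · have := hf (Set.mem_Ici.mpr hw.1.le) (Set.mem_Ici.mpr (by linarith [hw.2] : (-1:ℝ) ≤ 0)) hw.2
      simpa using this
  -- argument of W lands in Ioo(-e⁻¹, 0)
  have hyI : ∀ I : ℝ, 0 < I →
      -(R * (1 / R) * Real.exp (-(R * (1 / R + I)))) ∈ Set.Ioo (-Real.exp (-1)) 0 := by
    intro I hI
    have harg : R * (1 / R + I) = 1 + R * I := by
      rw [mul_add, hinv]
    constructor
    · rw [hinv, one_mul, harg]
      have : Real.exp (-(1 + R * I)) < Real.exp (-1) :=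
        Real.exp_lt_exp.mpr (by nlinarith)
      linarith
    · rw [hinv, one_mul]
      simpa using Real.exp_pos _
  refine ⟨hmono, hbij, ?_, ?_, ?_⟩
  · -- maps to
    intro I hI
    have hm := hmaps _ (hyI I hI)
    simp only [Set.mem_Ioo] at hm ⊢
    constructor
    · exact div_pos (by linarith [hm.2]) hR
    · rw [div_lt_div_iff₀ hR hR]
      nlinarith [hm.1]
  · -- injective
    intro I₁ h₁ I₂ h₂ heq
    simp only at heq
    have hW12 : W (-(R * (1 / R) * Real.exp (-(R * (1 / R + I₁))))) =
        W (-(R * (1 / R) * Real.exp (-(R * (1 / R + I₂))))) := by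
      have h' : -(W (-(R * (1 / R) * Real.exp (-(R * (1 / R + I₁)))))) =
          -(W (-(R * (1 / R) * Real.exp (-(R * (1 / R + I₂)))))) :=
        by
          have h2 := congrArg (fun x => x * R) heq
          simpa [div_mul_cancel₀, hR0] using h2
      linarith
    have hy12 := hinj (hyI I₁ h₁) (hyI I₂ h₂) hW12
    rw [hinv, one_mul, one_mul, neg_inj, Real.exp_eq_exp, neg_inj] at hy12
    have h1 : R * (1/R) + R * I₁ = R * (1/R) + R * I₂ := by
      rw [← mul_add, ← mul_add, hy12]
    have : R * I₁ = R * I₂ := by linarith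
    exact mul_left_cancel₀ hR0 this
  · -- surjective
    intro u hu
    obtain ⟨hu1, hu2⟩ := hu
    set t : ℝ := R * u with ht
    have ht0 : 0 < t := mul_pos hR hu1
    have ht1 : t < 1 := by
      have := (lt_div_iff₀ hR).mp hu2
      linarith [this]
    have hlog : Real.log t < t - 1 := Real.log_lt_sub_one_of_pos ht0 (ne_of_lt ht1)
    set I₀ : ℝ := (t - 1 - Real.log t) / R with hI₀
    have hI₀pos : 0 < I₀ := div_pos (by linarith) hR
    refine ⟨I₀, Set.mem_Ioi.mpr hI₀pos, ?_⟩
    simp only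
    have hRI : R * I₀ = t - 1 - Real.log t := by
      rw [hI₀]; field_simp
    have harg : -(R * (1 / R) * Real.exp (-(R * (1 / R + I₀)))) =
        (-t) * Real.exp (-t) := by
      rw [hinv, one_mul, mul_add, hinv, hRI]
      have : -(1 + (t - 1 - Real.log t)) = Real.log t + (-t) := by ring
      rw [this, Real.exp_add, Real.exp_log ht0]
      ring
    rw [harg, hW (-t) (by linarith)]
    rw [neg_neg, ht]
    field_simp
end

section
/- For fixed R > 0 and fixed U₀ > 0, the limit value U_∞(U₀, I₀, V₀) = -W(-R·U₀·e^{-R(U₀ + I₀ + (δ/p)V₀)})/R is strictly decreasing in I₀ and in V₀. -/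
private lemma mulExp_strictMono : StrictMonoOn (fun w : ℝ => w * Real.exp w) (Set.Ici (-1)) := by
  apply strictMonoOn_of_deriv_pos (convex_Ici _)
  · exact (continuous_id.mul Real.continuous_exp).continuousOn
  · intro x hx
    rw [interior_Ici] at hx
    have h : HasDerivAt (fun w : ℝ => w * Real.exp w) (1 * Real.exp x + x * Real.exp x) x :=
      (hasDerivAt_id x).mul (Real.hasDerivAt_exp x)
    rw [h.deriv]
    have : 0 < 1 + x := by linarith [Set.mem_Ioi.mp hx]
    nlinarith [Real.exp_pos x]

private lemma W_strictMono (W : ℝ → ℝ)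
    (hWrange : ∀ y : ℝ, -Real.exp (-1) ≤ y → y < 0 →
      -1 ≤ W y ∧ W y < 0 ∧ W y * Real.exp (W y) = y)
    {a b : ℝ} (ha : -Real.exp (-1) ≤ a) (hab : a < b) (hb : b < 0) : W a < W b := by
  obtain ⟨ha1, ha2, ha3⟩ := hWrange a ha (lt_trans hab hb)
  obtain ⟨hb1, hb2, hb3⟩ := hWrange b (le_trans ha hab.le) hb
  by_contra h
  push_neg at h
  have := (mulExp_strictMono.monotoneOn) (Set.mem_Ici.mpr hb1) (Set.mem_Ici.mpr ha1) h
  simp only at this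
  rw [hb3, ha3] at this
  linarith

private lemma key (R U₀ : ℝ) (hR : 0 < R) (hU₀ : 0 < U₀) (W : ℝ → ℝ)
    (hWrange : ∀ y : ℝ, -Real.exp (-1) ≤ y → y < 0 →
      -1 ≤ W y ∧ W y < 0 ∧ W y * Real.exp (W y) = y)
    {s₁ s₂ : ℝ} (hs₁ : U₀ ≤ s₁) (h12 : s₁ < s₂) :
    -(W (-(R * U₀ * Real.exp (-(R * s₂))))) / R
      < -(W (-(R * U₀ * Real.exp (-(R * s₁))))) / R := by
  set a : ℝ := -(R * U₀ * Real.exp (-(R * s₁))) with ha_def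
  set b : ℝ := -(R * U₀ * Real.exp (-(R * s₂))) with hb_def
  have hRU : 0 < R * U₀ := mul_pos hR hU₀
  have hab : a < b := by
    have : Real.exp (-(R * s₂)) < Real.exp (-(R * s₁)) := by
      apply Real.exp_lt_exp.mpr; nlinarith
    nlinarith
  have hb0 : b < 0 := by
    have := Real.exp_pos (-(R * s₂)); nlinarith
  have ha_ge : -Real.exp (-1) ≤ a := by
    have h1 : R * U₀ * Real.exp (-(R * s₁)) ≤ R * U₀ * Real.exp (-(R * U₀)) := by
      have : Real.exp (-(R * s₁)) ≤ Real.exp (-(R * U₀)) := by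
        apply Real.exp_le_exp.mpr; nlinarith
      nlinarith
    have h2 : R * U₀ * Real.exp (-(R * U₀)) ≤ Real.exp (-1) := by
      have h3 : R * U₀ - 1 + 1 ≤ Real.exp (R * U₀ - 1) := Real.add_one_le_exp _
      have h4 : Real.exp (R * U₀ - 1) * Real.exp (-(R * U₀)) = Real.exp (-1) := by
        rw [← Real.exp_add]; ring_nf
      nlinarith [Real.exp_pos (-(R * U₀))]
    linarith
  have hW : W a < W b := W_strictMono W hWrange ha_ge hab hb0
  exact (div_lt_div_iff_of_pos_right hR).mpr (by linarith)
/-- For fixed R > 0 and U₀ > 0, the limit value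
U_∞(U₀,I₀,V₀) = -W(-R·U₀·e^{-R(U₀+I₀+(δ/p)V₀)})/R is strictly decreasing in I₀
and in V₀. -/
theorem stmt14 (R δ p U₀ : ℝ) (hR : 0 < R) (hδ : 0 < δ) (hp : 0 < p)
    (hU₀ : 0 < U₀) (W : ℝ → ℝ)
    (hW : ∀ w : ℝ, -1 ≤ w → W (w * Real.exp w) = w)
    (hWrange : ∀ y : ℝ, -Real.exp (-1) ≤ y → y < 0 →
      -1 ≤ W y ∧ W y < 0 ∧ W y * Real.exp (W y) = y) :
    (∀ V₀ : ℝ, 0 ≤ V₀ → StrictAntiOn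
      (fun I₀ : ℝ =>
        -(W (-(R * U₀ * Real.exp (-(R * (U₀ + I₀ + (δ / p) * V₀)))))) / R)
      (Set.Ici 0)) ∧
    (∀ I₀ : ℝ, 0 ≤ I₀ → StrictAntiOn
      (fun V₀ : ℝ =>
        -(W (-(R * U₀ * Real.exp (-(R * (U₀ + I₀ + (δ / p) * V₀)))))) / R)
      (Set.Ici 0)) := by
  have hdp : 0 < δ / p := div_pos hδ hp
  constructor
  · intro V₀ hV₀ x hx y hy hxy
    apply key R U₀ hR hU₀ W hWrange
    · simp only [Set.mem_Ici] at hx; nlinarith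
    · linarith
  · intro I₀ hI₀ x hx y hy hxy
    apply key R U₀ hR hU₀ W hWrange
    · simp only [Set.mem_Ici] at hx; nlinarith
    · nlinarith
end
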